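/- Let φ = (φ_1,…,φ_N): B_N → B_N be holomorphic. Then the identity 1 − log(1 − ⟨φ(z),w⟩) = 1 − log(1 − ⟨z,φ(w)⟩) holds for all z,w ∈ B_N if and only if there exists a Hermitian N×N complex matrix M (M equals its conjugate transpose) such that φ(z) = Mz for all z ∈ B_N; in that case M = φ'(0) and the operator norm of M is at most 1. -/

import Mathlib

open ComplexConjugate

/-- The open unit ball of `ℂ^N` (Euclidean norm). -/
def unitBall (N : ℕ) : Set (Fin N → ℂ) := {z | ∑ j, ‖z j‖ ^ 2 < 1}

/-- The Jacobian matrix `φ'(0)`, with `(i, j)` entry `(∂φ_i/∂z_j)(0)`. -/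
noncomputable def jac0 (N : ℕ) (φ : (Fin N → ℂ) → Fin N → ℂ) :
    Matrix (Fin N) (Fin N) ℂ :=
  Matrix.of fun i j => fderiv ℂ φ 0 (Pi.single j 1) i

section aux

/-- half of a standard basis vector -/
noncomputable def halfS (N : ℕ) (i : Fin N) : Fin N → ℂ := fun j => if j = i then (2:ℂ)⁻¹ else 0

lemma halfS_apply (N : ℕ) (i j : Fin N) :
    halfS N i j = if j = i then (2:ℂ)⁻¹ else 0 := rfl


variable {N : ℕ}

lemma euclid_norm_eq (z : Fin N → ℂ) :
    ‖(WithLp.equiv 2 (Fin N → ℂ)).symm z‖ = Real.sqrt (∑ j, ‖z j‖ ^ 2) := by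
  rw [EuclideanSpace.norm_eq]
  rfl

lemma norm_lt_one_of_mem {z : Fin N → ℂ} (hz : z ∈ unitBall N) :
    ‖(WithLp.equiv 2 (Fin N → ℂ)).symm z‖ < 1 := by
  rw [euclid_norm_eq]
  rw [show (1:ℝ) = Real.sqrt 1 by simp]
  exact Real.sqrt_lt_sqrt (by positivity) hz

lemma mem_of_norm_lt_one {z : Fin N → ℂ}
    (hz : ‖(WithLp.equiv 2 (Fin N → ℂ)).symm z‖ < 1) : z ∈ unitBall N := by
  rw [euclid_norm_eq, Real.sqrt_lt' one_pos] at hz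
  simpa [unitBall] using hz

lemma cs_lt_one {a b : Fin N → ℂ} (ha : a ∈ unitBall N) (hb : b ∈ unitBall N) :
    ‖∑ j, a j * conj (b j)‖ < 1 := by
  set a' : EuclideanSpace ℂ (Fin N) := (WithLp.equiv 2 (Fin N → ℂ)).symm a
  set b' : EuclideanSpace ℂ (Fin N) := (WithLp.equiv 2 (Fin N → ℂ)).symm b
  have h1 : (inner ℂ b' a' : ℂ) = ∑ j, a j * conj (b j) := by
    rw [PiLp.inner_apply]
    exact Finset.sum_congr rfl fun j _ => by
      simp [a', b', RCLike.inner_apply, mul_comm]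
  have h2 : ‖(inner ℂ b' a' : ℂ)‖ ≤ ‖b'‖ * ‖a'‖ := norm_inner_le_norm b' a'
  rw [h1] at h2
  calc ‖∑ j, a j * conj (b j)‖ ≤ ‖b'‖ * ‖a'‖ := h2
    _ < 1 * 1 := by
        apply mul_lt_mul' (le_of_lt (norm_lt_one_of_mem hb)) (norm_lt_one_of_mem ha)
          (norm_nonneg _) one_pos
    _ = 1 := by ring

/-- half of a basis vector is in the ball -/
lemma half_single_mem (i : Fin N) : halfS N i ∈ unitBall N := by
  have h : ∀ j, ‖halfS N i j‖ ^ 2 = if j = i then (4:ℝ)⁻¹ else 0 := by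
    intro j
    rw [halfS_apply]
    by_cases hj : j = i <;> simp [hj]
    norm_num
  simp only [unitBall, Set.mem_setOf_eq]
  rw [Finset.sum_congr rfl fun j _ => h j]
  simp
  norm_num

end aux

theorem stmt_6 (N : ℕ) (hN : 1 ≤ N)
    (φ : (Fin N → ℂ) → Fin N → ℂ)
    (hφ : DifferentiableOn ℂ φ (unitBall N))
    (hmap : ∀ z ∈ unitBall N, φ z ∈ unitBall N) :
    ((∀ z ∈ unitBall N, ∀ w ∈ unitBall N,
        1 - Complex.log (1 - ∑ j, φ z j * conj (w j)) =
          1 - Complex.log (1 - ∑ j, z j * conj (φ w j))) ↔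
      ∃ M : Matrix (Fin N) (Fin N) ℂ, M.conjTranspose = M ∧
        ∀ z ∈ unitBall N, φ z = M.mulVec z) ∧
    ((∀ z ∈ unitBall N, ∀ w ∈ unitBall N,
        1 - Complex.log (1 - ∑ j, φ z j * conj (w j)) =
          1 - Complex.log (1 - ∑ j, z j * conj (φ w j))) →
      ∀ M : Matrix (Fin N) (Fin N) ℂ, M.conjTranspose = M →
        (∀ z ∈ unitBall N, φ z = M.mulVec z) →
        M = jac0 N φ ∧
          ‖LinearMap.toContinuousLinearMap (Matrix.toEuclideanLin M)‖ ≤ 1) := by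
  -- key equivalence: the log identity ↔ the inner product identity
  have key : ∀ z ∈ unitBall N, ∀ w ∈ unitBall N,
      (1 - Complex.log (1 - ∑ j, φ z j * conj (w j)) =
        1 - Complex.log (1 - ∑ j, z j * conj (φ w j))) ↔
      (∑ j, φ z j * conj (w j)) = ∑ j, z j * conj (φ w j) := by
    intro z hz w hw
    constructor
    · intro h
      have h1 : ‖∑ j, φ z j * conj (w j)‖ < 1 := cs_lt_one (hmap z hz) hw
      have h2 : ‖∑ j, z j * conj (φ w j)‖ < 1 := cs_lt_one hz (hmap w hw)
      have ne1 : (1 - ∑ j, φ z j * conj (w j)) ≠ 0 := by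
        intro hc
        have : (∑ j, φ z j * conj (w j)) = 1 := by linear_combination -hc
        rw [this] at h1; simp at h1
      have ne2 : (1 - ∑ j, z j * conj (φ w j)) ≠ 0 := by
        intro hc
        have : (∑ j, z j * conj (φ w j)) = 1 := by linear_combination -hc
        rw [this] at h2; simp at h2
      have hlog : Complex.log (1 - ∑ j, φ z j * conj (w j)) =
          Complex.log (1 - ∑ j, z j * conj (φ w j)) := by linear_combination -h
      have := congrArg Complex.exp hlog
      rw [Complex.exp_log ne1, Complex.exp_log ne2] at this
      linear_combination -this
    · intro h; rw [h]
  constructor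
  · constructor
    · -- forward direction
      intro hid
      have hinner : ∀ z ∈ unitBall N, ∀ w ∈ unitBall N,
          (∑ j, φ z j * conj (w j)) = ∑ j, z j * conj (φ w j) :=
        fun z hz w hw => (key z hz w hw).1 (hid z hz w hw)
      set M : Matrix (Fin N) (Fin N) ℂ :=
        Matrix.of (fun i j => 2 * conj (φ (halfS N i) j)) with hM
      have hlin : ∀ z ∈ unitBall N, φ z = M.mulVec z := by
        intro z hz
        funext i
        have := hinner z hz _ (half_single_mem i)
        have hl : (∑ j, φ z j * conj (halfS N i j)) =
            φ z i * 2⁻¹ := by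
          rw [Finset.sum_eq_single i]
          · simp [halfS_apply, Complex.conj_ofNat]
          · intro j _ hj; simp [halfS_apply, hj]
          · simp
        rw [hl] at this
        have : φ z i = 2 * ∑ j, z j * conj (φ (halfS N i) j) := by
          field_simp at this ⊢
          linear_combination this
        rw [this, Matrix.mulVec, dotProduct, Finset.mul_sum]
        exact Finset.sum_congr rfl fun j _ => by simp [hM]; ring
      refine ⟨M, ?_, hlin⟩
      -- Hermitian
      ext i j
      have h1 := hinner _ (half_single_mem j) _ (half_single_mem i)
      rw [hlin _ (half_single_mem j)] at h1
      rw [hlin _ (half_single_mem i)] at h1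
      have hmv : ∀ k l : Fin N, M.mulVec (halfS N k) l = 2⁻¹ * M l k := by
        intro k l
        rw [Matrix.mulVec, dotProduct, Finset.sum_eq_single k]
        · rw [halfS_apply]; simp; ring
        · intro b _ hb; simp [halfS_apply, hb]
        · simp
      have hl : (∑ l, M.mulVec (halfS N j) l *
          conj (halfS N i l)) = 4⁻¹ * M i j := by
        rw [Finset.sum_eq_single i]
        · rw [hmv, halfS_apply]; simp [Complex.conj_ofNat, map_inv₀]
          ring_nf
        · intro b _ hb; simp [halfS_apply, hb]
        · simp
      have hr : (∑ l, halfS N j l *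
          conj (M.mulVec (halfS N i) l)) = 4⁻¹ * conj (M j i) := by
        rw [Finset.sum_eq_single j]
        · rw [hmv, halfS_apply]; simp [Complex.conj_ofNat, map_inv₀]
          ring_nf
        · intro b _ hb; simp [halfS_apply, hb]
        · simp
      rw [hl, hr] at h1
      have : M i j = conj (M j i) := by
        have h4 : (4:ℂ)⁻¹ ≠ 0 := by norm_num
        field_simp at h1
        linear_combination h1
      simp [Matrix.conjTranspose_apply, ← this]
    · -- backward direction
      rintro ⟨M, hherm, hlin⟩ z hz w hw
      rw [(key z hz w hw).2]
      rw [hlin z hz, hlin w hw]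
      have hconj : ∀ a b : Fin N, conj (M a b) = M b a := by
        intro a b
        conv_rhs => rw [← hherm]
        simp [Matrix.conjTranspose_apply]
      calc (∑ j, M.mulVec z j * conj (w j))
          = ∑ j, ∑ k, M j k * z k * conj (w j) := by
            refine Finset.sum_congr rfl fun j _ => ?_
            rw [Matrix.mulVec, dotProduct, Finset.sum_mul]
        _ = ∑ k, ∑ j, M j k * z k * conj (w j) := Finset.sum_comm
        _ = ∑ k, z k * conj (M.mulVec w k) := by
            refine Finset.sum_congr rfl fun k _ => ?_
            rw [Matrix.mulVec, dotProduct, map_sum, Finset.mul_sum]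
            refine Finset.sum_congr rfl fun j _ => ?_
            rw [map_mul, hconj]
            ring
  · -- second part
    intro hid M hherm hlin
    have hopen : IsOpen (unitBall N) := by
      have : Continuous fun z : Fin N → ℂ => ∑ j, ‖z j‖ ^ 2 := by continuity
      exact isOpen_lt this continuous_const
    have h0 : (0 : Fin N → ℂ) ∈ unitBall N := by simp [unitBall]
    constructor
    · -- M = jac0
      have heq : φ =ᶠ[nhds 0] fun z => M.mulVec z :=
        Filter.eventuallyEq_of_mem (hopen.mem_nhds h0) hlin
      set L : (Fin N → ℂ) →L[ℂ] (Fin N → ℂ) :=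
        LinearMap.toContinuousLinearMap M.mulVecLin with hL
      have hf : fderiv ℂ φ 0 = L := by
        have h1 : fderiv ℂ (fun z => M.mulVec z) 0 = L := by
          have : (fun z : Fin N → ℂ => M.mulVec z) = fun z => L z := rfl
          rw [this, L.fderiv]
        rw [heq.fderiv_eq, h1]
      ext i j
      rw [jac0, Matrix.of_apply, hf]
      show M i j = M.mulVec (Pi.single j 1) i
      rw [Matrix.mulVec, dotProduct, Finset.sum_eq_single j]
      · simp
      · intro b _ hb; simp [halfS_apply, hb]
      · simp
    · -- norm bound
      apply ContinuousLinearMap.opNorm_le_bound _ zero_le_one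
      intro x
      rw [one_mul]
      set v : Fin N → ℂ := WithLp.equiv 2 (Fin N → ℂ) x with hv
      have hx : x = (WithLp.equiv 2 (Fin N → ℂ)).symm v := rfl
      have happ : (LinearMap.toContinuousLinearMap (Matrix.toEuclideanLin M)) x =
          (WithLp.equiv 2 (Fin N → ℂ)).symm (M.mulVec v) := by
        show Matrix.toEuclideanLin M x = _
        rw [hx]; rfl
      rw [happ, hx]
      -- suffices : ∀ ε > 0, ‖Mv‖ ≤ ‖v‖ + ε
      apply le_of_forall_pos_le_add
      intro ε hε
      set c : ℝ := ‖(WithLp.equiv 2 (Fin N → ℂ)).symm v‖ + ε with hc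
      have hcpos : 0 < c := by positivity
      have hy : ((c:ℂ)⁻¹ • v) ∈ unitBall N := by
        apply mem_of_norm_lt_one
        have : (WithLp.equiv 2 (Fin N → ℂ)).symm ((c:ℂ)⁻¹ • v) =
            (c:ℂ)⁻¹ • (WithLp.equiv 2 (Fin N → ℂ)).symm v := rfl
        rw [this, norm_smul]
        simp only [norm_inv, Complex.norm_real]
        rw [Real.norm_of_nonneg hcpos.le]
        rw [inv_mul_lt_iff₀ hcpos, mul_one]
        simp [hc, hε]
      have hmem := hmap _ hy
      rw [hlin _ hy] at hmem
      have hlt := norm_lt_one_of_mem hmem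
      have hsmul : M.mulVec ((c:ℂ)⁻¹ • v) = (c:ℂ)⁻¹ • M.mulVec v := by
        rw [Matrix.mulVec_smul]
      rw [hsmul] at hlt
      have : (WithLp.equiv 2 (Fin N → ℂ)).symm ((c:ℂ)⁻¹ • M.mulVec v) =
          (c:ℂ)⁻¹ • (WithLp.equiv 2 (Fin N → ℂ)).symm (M.mulVec v) := rfl
      rw [this, norm_smul] at hlt
      simp only [norm_inv, Complex.norm_real] at hlt
      rw [Real.norm_of_nonneg hcpos.le, inv_mul_lt_iff₀ hcpos, mul_one] at hlt
      exact hlt.le
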